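/- Let ℬ₀ ⊆ ℂ^{N×M} and ℬ₁ ⊆ {Hermitian PSD N×N matrices} be sets, Q̂ ∈ ℂ^{N×M}, R̂ Hermitian, with ℬ₀ = {Q : ‖Q - Q̂‖_F ≤ √η} and η < ‖Q̂‖_F². Then for any nonzero w ∈ ℂ^N, the infimum over Q ∈ ℬ₀ of ‖Q^H w‖ equals max{‖Q̂^H w‖ - √η ‖w‖, 0}. -/

import Mathlib

open Matrix Complex
open scoped ComplexOrder

/-- The largest real eigenvalue of a complex matrix (as `sSup` of its set of real
eigenvalues); for a Hermitian matrix this is the largest eigenvalue. -/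
noncomputable def lambdaMax {N : ℕ} (A : Matrix (Fin N) (Fin N) ℂ) : ℝ :=
  sSup {t : ℝ | ∃ v : Fin N → ℂ, v ≠ 0 ∧ A.mulVec v = (t : ℂ) • v}

open Classical in
/-- The inverse of the positive definite square root of a positive definite matrix
(junk value `0` if the matrix is not positive definite). -/
noncomputable def isqrt {N : ℕ} (R : Matrix (Fin N) (Fin N) ℂ) : Matrix (Fin N) (Fin N) ℂ :=
  if h : R.PosDef then
    (h.posSemidef.1.eigenvectorUnitary.1 *
      diagonal ((↑) ∘ (√·) ∘ h.posSemidef.1.eigenvalues) *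
      (star h.posSemidef.1.eigenvectorUnitary : Matrix (Fin N) (Fin N) ℂ))⁻¹ else 0

/-- Euclidean norm of a complex vector. -/
noncomputable def vecNorm {N : ℕ} (v : Fin N → ℂ) : ℝ :=
  Real.sqrt (∑ i, Complex.normSq (v i))

/-- Frobenius norm of a complex matrix. -/
noncomputable def frobNorm {N M : ℕ} (X : Matrix (Fin N) (Fin M) ℂ) : ℝ :=
  Real.sqrt (∑ i, ∑ j, Complex.normSq (X i j))

section aux
variable {N M : ℕ}

lemma vecNorm_nonneg (v : Fin N → ℂ) : 0 ≤ vecNorm v := Real.sqrt_nonneg _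

lemma sum_normSq_nonneg (v : Fin N → ℂ) : 0 ≤ ∑ i, Complex.normSq (v i) :=
  Finset.sum_nonneg fun _ _ => Complex.normSq_nonneg _

lemma vecNorm_sq (v : Fin N → ℂ) : vecNorm v ^ 2 = ∑ i, Complex.normSq (v i) :=
  Real.sq_sqrt (sum_normSq_nonneg v)

lemma vecNorm_pos {v : Fin N → ℂ} (hv : v ≠ 0) : 0 < vecNorm v := by
  obtain ⟨i, hi⟩ : ∃ i, v i ≠ 0 := by
    by_contra h; push_neg at h; exact hv (funext h)
  apply Real.sqrt_pos.2
  have : 0 < Complex.normSq (v i) := Complex.normSq_pos.2 hi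
  exact lt_of_lt_of_le this (Finset.single_le_sum (fun j _ => Complex.normSq_nonneg (v j)) (Finset.mem_univ i))

lemma vecNorm_smul (t : ℝ) (v : Fin N → ℂ) : vecNorm ((t : ℂ) • v) = |t| * vecNorm v := by
  unfold vecNorm
  have : ∀ i, Complex.normSq (((t : ℂ) • v) i) = t ^ 2 * Complex.normSq (v i) := by
    intro i
    simp [Complex.normSq_mul, Complex.normSq_ofReal, sq]
  rw [Finset.sum_congr rfl fun i _ => this i, ← Finset.mul_sum,
    Real.sqrt_mul (sq_nonneg t), Real.sqrt_sq_eq_abs]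

lemma vecNorm_triangle (u v : Fin N → ℂ) : vecNorm (u + v) ≤ vecNorm u + vecNorm v := by
  have key : ∀ x : Fin N → ℂ, vecNorm x = ‖(WithLp.equiv 2 (Fin N → ℂ)).symm x‖ := by
    intro x
    rw [EuclideanSpace.norm_eq]
    unfold vecNorm
    congr 1
    refine Finset.sum_congr rfl fun i _ => ?_
    rw [Complex.normSq_eq_norm_sq]; rfl
  rw [key, key, key]
  exact norm_add_le _ _

lemma frobNorm_neg (X : Matrix (Fin N) (Fin M) ℂ) : frobNorm (-X) = frobNorm X := by
  unfold frobNorm; simp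

/-- Cauchy–Schwarz: `‖Xᴴ w‖ ≤ ‖X‖_F ‖w‖`. -/
lemma vecNorm_mulVec_le (X : Matrix (Fin N) (Fin M) ℂ) (w : Fin N → ℂ) :
    vecNorm (Xᴴ.mulVec w) ≤ frobNorm X * vecNorm w := by
  have hsq : ∑ j, Complex.normSq ((Xᴴ.mulVec w) j)
      ≤ (∑ i, ∑ j, Complex.normSq (X i j)) * ∑ i, Complex.normSq (w i) := by
    have hj : ∀ j, Complex.normSq ((Xᴴ.mulVec w) j)
        ≤ (∑ i, Complex.normSq (X i j)) * ∑ i, Complex.normSq (w i) := by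
      intro j
      have h1 : ‖(Xᴴ.mulVec w) j‖ ≤ ∑ i, ‖X i j‖ * ‖w i‖ := by
        rw [Matrix.mulVec, dotProduct]
        refine le_trans (norm_sum_le _ _) (le_of_eq ?_)
        refine Finset.sum_congr rfl fun i _ => ?_
        rw [Matrix.conjTranspose_apply, norm_mul]
        simp
      have h2 : (∑ i, ‖X i j‖ * ‖w i‖) ^ 2
          ≤ (∑ i, ‖X i j‖ ^ 2) * ∑ i, ‖w i‖ ^ 2 :=
        Finset.sum_mul_sq_le_sq_mul_sq _ _ _
      calc Complex.normSq ((Xᴴ.mulVec w) j) = ‖(Xᴴ.mulVec w) j‖ ^ 2 := by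
            rw [Complex.sq_norm]
        _ ≤ (∑ i, ‖X i j‖ * ‖w i‖) ^ 2 := by
            apply pow_le_pow_left₀ (norm_nonneg _) h1 2
        _ ≤ (∑ i, ‖X i j‖ ^ 2) * ∑ i, ‖w i‖ ^ 2 := h2
        _ = (∑ i, Complex.normSq (X i j)) * ∑ i, Complex.normSq (w i) := by
            simp [Complex.sq_norm]
    calc ∑ j, Complex.normSq ((Xᴴ.mulVec w) j)
        ≤ ∑ j, (∑ i, Complex.normSq (X i j)) * ∑ i, Complex.normSq (w i) :=
          Finset.sum_le_sum fun j _ => hj j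
      _ = (∑ j, ∑ i, Complex.normSq (X i j)) * ∑ i, Complex.normSq (w i) := by
          rw [Finset.sum_mul]
      _ = (∑ i, ∑ j, Complex.normSq (X i j)) * ∑ i, Complex.normSq (w i) := by
          rw [Finset.sum_comm]
  unfold vecNorm frobNorm
  calc Real.sqrt (∑ j, Complex.normSq ((Xᴴ.mulVec w) j))
      ≤ Real.sqrt ((∑ i, ∑ j, Complex.normSq (X i j)) * ∑ i, Complex.normSq (w i)) :=
        Real.sqrt_le_sqrt hsq
    _ = _ := Real.sqrt_mul (Finset.sum_nonneg fun _ _ =>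
        Finset.sum_nonneg fun _ _ => Complex.normSq_nonneg _) _

/-- The rank-one perturbation. -/
noncomputable def pert {N M : ℕ} (w : Fin N → ℂ) (u : Fin M → ℂ) (c : ℝ) :
    Matrix (Fin N) (Fin M) ℂ :=
  Matrix.of fun i j => -(c : ℂ) * w i * (starRingEnd ℂ) (u j)

lemma pert_mulVec (w : Fin N → ℂ) (u : Fin M → ℂ) (c : ℝ) :
    (pert w u c)ᴴ.mulVec w = ((-(c * (vecNorm w) ^ 2) : ℝ) : ℂ) • u := by
  funext j
  have hw : ∀ i, (starRingEnd ℂ) (w i) * w i = (Complex.normSq (w i) : ℂ) := fun i => by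
    rw [mul_comm, Complex.mul_conj]
  calc ((pert w u c)ᴴ.mulVec w) j = ∑ i, (starRingEnd ℂ) (pert w u c i j) * w i := by
        simp [Matrix.mulVec, dotProduct, Matrix.conjTranspose_apply]
    _ = ∑ i, -(c : ℂ) * u j * (Complex.normSq (w i) : ℂ) := by
        refine Finset.sum_congr rfl fun i _ => ?_
        simp only [pert, Matrix.of_apply, _root_.map_mul, map_neg, Complex.conj_conj,
          Complex.conj_ofReal]
        rw [← hw i]; ring
    _ = ((-(c * (vecNorm w) ^ 2) : ℝ) : ℂ) * u j := by
        rw [← Finset.mul_sum, vecNorm_sq]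
        push_cast
        ring
    _ = (((-(c * (vecNorm w) ^ 2) : ℝ) : ℂ) • u) j := rfl

lemma frobNorm_pert (w : Fin N → ℂ) (u : Fin M → ℂ) {c : ℝ} (hc : 0 ≤ c) :
    frobNorm (pert w u c) = c * vecNorm w * vecNorm u := by
  unfold frobNorm pert vecNorm
  have : ∀ i j, Complex.normSq (-(c : ℂ) * w i * (starRingEnd ℂ) (u j))
      = c ^ 2 * (Complex.normSq (w i) * Complex.normSq (u j)) := by
    intro i j
    rw [Complex.normSq_mul, Complex.normSq_mul, Complex.normSq_neg, Complex.normSq_conj, Complex.normSq_ofReal]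
    ring
  simp only [Matrix.of_apply]
  rw [Finset.sum_congr rfl fun i _ => Finset.sum_congr rfl fun j _ => this i j]
  simp only [← Finset.mul_sum, ← Finset.sum_mul]
  rw [Real.sqrt_mul (sq_nonneg c), Real.sqrt_mul (sum_normSq_nonneg w),
    Real.sqrt_sq_eq_abs, _root_.abs_of_nonneg hc, mul_assoc]

end aux

/-- for the Frobenius ball `ℬ₀ = {Q : ‖Q - Q̂‖_F ≤ √η}` with
`η < ‖Q̂‖_F²`, and any nonzero `w`, `inf_{Q ∈ ℬ₀} ‖Qᴴ w‖ = max{‖Q̂ᴴ w‖ - √η ‖w‖, 0}`. -/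
theorem inf_norm_over_frobenius_ball {N M : ℕ}
    (Qhat : Matrix (Fin N) (Fin M) ℂ) (η : ℝ) (hη : 0 < η)
    (hsmall : η < frobNorm Qhat ^ 2)
    (w : Fin N → ℂ) (hw : w ≠ 0) :
    IsGLB
      {r : ℝ | ∃ Q : Matrix (Fin N) (Fin M) ℂ,
        frobNorm (Q - Qhat) ≤ Real.sqrt η ∧ r = vecNorm (Qᴴ.mulVec w)}
      (max (vecNorm (Qhatᴴ.mulVec w) - Real.sqrt η * vecNorm w) 0) := by
  set u := Qhatᴴ.mulVec w with hu
  set a := vecNorm u with ha_def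
  set b := vecNorm w with hb_def
  set s := Real.sqrt η with hs_def
  have hb : 0 < b := vecNorm_pos hw
  have hs : 0 < s := Real.sqrt_pos.2 hη
  have ha : 0 ≤ a := vecNorm_nonneg u
  have key : ∀ c : ℝ, (Qhat + pert w u c)ᴴ.mulVec w = ((1 - c * b ^ 2 : ℝ) : ℂ) • u := by
    intro c
    rw [Matrix.conjTranspose_add, Matrix.add_mulVec, pert_mulVec, ← hu, ← hb_def]
    have h1 : ((1 - c * b ^ 2 : ℝ) : ℂ) • u = (1 : ℂ) • u + ((-(c * b ^ 2) : ℝ) : ℂ) • u := by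
      rw [← add_smul]
      norm_cast
    rw [h1, one_smul]
  constructor
  · rintro r ⟨Q, hQ, rfl⟩
    refine max_le ?_ (vecNorm_nonneg _)
    have tri : a ≤ vecNorm (Qᴴ.mulVec w) + vecNorm ((Qhat - Q)ᴴ.mulVec w) := by
      have h2 : u = Qᴴ.mulVec w + (Qhat - Q)ᴴ.mulVec w := by
        rw [hu, Matrix.conjTranspose_sub, Matrix.sub_mulVec]
        ring_nf
      rw [ha_def, h2]
      exact vecNorm_triangle _ _
    have hb2 : vecNorm ((Qhat - Q)ᴴ.mulVec w) ≤ s * b := by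
      calc vecNorm ((Qhat - Q)ᴴ.mulVec w) ≤ frobNorm (Qhat - Q) * b := vecNorm_mulVec_le _ _
        _ = frobNorm (Q - Qhat) * b := by rw [← frobNorm_neg, neg_sub]
        _ ≤ s * b := mul_le_mul_of_nonneg_right hQ hb.le
    linarith
  · intro r hr
    apply hr
    by_cases hcase : a ≤ s * b
    · refine ⟨Qhat + pert w u (1 / b ^ 2), ?_, ?_⟩
      · rw [add_sub_cancel_left, frobNorm_pert w u (by positivity), ← hb_def, ← ha_def]
        calc 1 / b ^ 2 * b * a = a / b := by field_simp
          _ ≤ s := by rw [div_le_iff₀ hb]; linarith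
      · rw [key, show (1 - 1 / b ^ 2 * b ^ 2 : ℝ) = 0 by field_simp; ring]
        rw [max_eq_right (by nlinarith : a - s * b ≤ 0)]
        simp [vecNorm_smul, vecNorm]
    · push_neg at hcase
      have ha' : 0 < a := lt_trans (by positivity) hcase
      refine ⟨Qhat + pert w u (s / (a * b)), ?_, ?_⟩
      · rw [add_sub_cancel_left, frobNorm_pert w u (by positivity), ← hb_def, ← ha_def]
        rw [show s / (a * b) * b * a = s by field_simp]
      · have hcoef : 1 - s / (a * b) * b ^ 2 = (a - s * b) / a := by field_simp
        rw [key, max_eq_left (by nlinarith : 0 ≤ a - s * b), vecNorm_smul, ← ha_def, hcoef,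
          _root_.abs_of_nonneg (div_nonneg (by linarith) ha)]
        field_simp
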